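/- The number of vertices of LR^k(2^m) equals 2^m + k + 1 + 2k + Σ_{i=1}^{k} (2k − 2i + 1)·C(m−1, i). -/

import Mathlib

open Finset

/-- `a` and `b` are `L`-neighbors: `a < b` and `L ∩ {a, …, b} = {a, b}`. -/
def LNbr (L : Set ℕ) (a b : ℕ) : Prop := a < b ∧ L ∩ Set.Icc a b = {a, b}

/-- The layers of the layered ring graph `LR^k(2^m)`:
`L^1 = {0, 1, 2, 4, …, 2^(m-1), 2^m}` and
`L^(i+1) = {0} ∪ ⋃_{N^i(a,b)} {a + 2^t : 0 ≤ t ≤ log₂ (b - a)}`. -/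
def Lset (m : ℕ) : ℕ → Set ℕ
  | 0 => ∅
  | 1 => {0} ∪ {x | ∃ t ≤ m, x = 2 ^ t}
  | i + 2 => {0} ∪ {x | ∃ a b, LNbr (Lset m (i + 1)) a b ∧
      ∃ t ≤ Nat.log 2 (b - a), x = a + 2 ^ t}

/-- The vertices of `LR^k(2^m)`, encoded as pairs `(i, t)`: `(0, t)` is the backbone
vertex `b_t` (for `t ≤ 2^m`), and `(i, t)` with `1 ≤ i ≤ k` is the layer vertex `ℓ^i_t`
(for `t ∈ L^i`). The position of `(i, t)` is `t`. -/
def LRVertexSet (m k : ℕ) : Set (ℕ × ℕ) :=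
  {v | (v.1 = 0 ∧ v.2 ≤ 2 ^ m) ∨ (1 ≤ v.1 ∧ v.1 ≤ k ∧ v.2 ∈ Lset m v.1)}

/-- The layered ring graph `LR^k(2^m)`: two distinct vertices are adjacent iff their
positions differ by at most `1` modulo `2^m + 1`. -/
def LRGraph (m k : ℕ) : SimpleGraph (LRVertexSet m k) :=
  SimpleGraph.fromRel
    (fun u v => (u.val.2 + 1) % (2 ^ m + 1) = v.val.2 % (2 ^ m + 1) ∨ u.val.2 = v.val.2)

namespace LRC
def N (S : Finset ℕ) : ℕ := ∑ i ∈ S, 2 ^ i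
def B (x : ℕ) : Finset ℕ := x.bitIndices.toFinset
def pc (x : ℕ) : ℕ := (B x).card
@[simp] lemma N_B (x : ℕ) : N (B x) = x := Finset.twoPowSum_toFinset_bitIndices x
@[simp] lemma B_N (S : Finset ℕ) : B (N S) = S := Finset.toFinset_bitIndices_twoPowSum S
lemma N_union {S T : Finset ℕ} (h : Disjoint S T) : N (S ∪ T) = N S + N T := sum_union h
lemma two_pow_le_N {i : ℕ} {S : Finset ℕ} (h : i ∈ S) : 2 ^ i ≤ N S :=
  single_le_sum (fun _ _ => Nat.zero_le _) h
lemma N_range (m : ℕ) : N (range m) = 2 ^ m - 1 := by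
  induction m with
  | zero => simp [N]
  | succ n ih =>
    rw [N, Finset.sum_range_succ, ← N, ih]
    have := Nat.one_le_two_pow (n := n)
    omega
lemma N_lt {S : Finset ℕ} {m : ℕ} (h : S ⊆ range m) : N S < 2 ^ m := by
  have h1 : N S ≤ N (range m) := sum_le_sum_of_subset h
  have h2 := N_range m
  have := Nat.one_le_two_pow (n := m)
  omega
lemma lt_two_pow_iff {x m : ℕ} : x < 2 ^ m ↔ B x ⊆ range m := by
  constructor
  · intro h i hi
    rw [mem_range]
    by_contra hc
    have h1 : 2 ^ m ≤ 2 ^ i := Nat.pow_le_pow_right (by norm_num) (by omega)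
    have h2 := two_pow_le_N hi
    rw [N_B] at h2
    omega
  · intro h
    have := N_lt h
    rwa [N_B] at this
@[simp] lemma B_zero : B 0 = ∅ := by simp [B]
@[simp] lemma B_two_pow (t : ℕ) : B (2 ^ t) = {t} := by simp [B]
lemma B_eq_empty {x : ℕ} : B x = ∅ ↔ x = 0 := by
  constructor
  · intro h
    have := N_B x
    rw [h] at this
    simpa [N] using this.symm
  · rintro rfl; simp
lemma pc_eq_zero {x : ℕ} : pc x = 0 ↔ x = 0 := by rw [pc, card_eq_zero, B_eq_empty]

-- new part
lemma pc_N {S : Finset ℕ} : pc (N S) = S.card := by rw [pc, B_N]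

lemma N_add_N {S T : Finset ℕ} (h : Disjoint S T) : N S + N T = N (S ∪ T) := (N_union h).symm

/-- adding a number whose bits are all below the bits of `a`. -/
lemma pc_add_low {a e u : ℕ} (ha : ∀ i ∈ B a, u ≤ i) (he : e < 2 ^ u) :
    pc (a + e) = pc a + pc e := by
  have hdis : Disjoint (B a) (B e) := by
    rw [Finset.disjoint_left]
    intro i hia hie
    have := lt_two_pow_iff.1 he hie
    rw [mem_range] at this
    exact absurd (ha i hia) (by omega)
  have h2 : a + e = N (B a ∪ B e) := by rw [N_union hdis, N_B, N_B]
  rw [h2, pc_N, card_union_of_disjoint hdis, pc, pc]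

lemma pc_add_two_pow_aux : ∀ n x t : ℕ, pc x ≤ n → pc (x + 2 ^ t) ≤ pc x + 1 := by
  intro n
  induction n with
  | zero =>
    intro x t hx
    have hx0 : x = 0 := pc_eq_zero.1 (by omega)
    subst hx0
    simp [pc]
  | succ n ih =>
    intro x t hx
    by_cases ht : t ∈ B x
    · -- x = N(erase) + 2^t, x + 2^t = N(erase) + 2^(t+1)
      have hx' : x = 2 ^ t + N ((B x).erase t) := by
        conv_lhs => rw [← N_B x]
        rw [N, ← Finset.add_sum_erase _ _ ht, ← N]
      have hcard : ((B x).erase t).card = pc x - 1 := by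
        rw [card_erase_of_mem ht]; rfl
      have hpc : pc (N ((B x).erase t)) = pc x - 1 := by rw [pc_N, hcard]
      have hpcx : 1 ≤ pc x := by
        have : (B x).Nonempty := ⟨t, ht⟩
        have := Finset.card_pos.2 this
        exact this
      set c := N ((B x).erase t) with hc
      have heq : x + 2 ^ t = c + 2 ^ (t + 1) := by rw [pow_succ]; omega
      rw [heq]
      have := ih c (t + 1) (by omega)
      omega
    · have : x + 2 ^ t = N (insert t (B x)) := by
        rw [N, Finset.sum_insert ht, ← N, N_B]; ring
      rw [this, pc_N, card_insert_of_notMem ht]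
      rfl

lemma pc_add_two_pow (x t : ℕ) : pc (x + 2 ^ t) ≤ pc x + 1 :=
  pc_add_two_pow_aux (pc x) x t le_rfl

lemma N_Ico {u s : ℕ} (h : u ≤ s) : N (Ico u s) = 2 ^ s - 2 ^ u := by
  have hsplit : range s = range u ∪ Ico u s := by
    rw [Finset.range_eq_Ico, Finset.range_eq_Ico]
    exact (Finset.Ico_union_Ico_eq_Ico (Nat.zero_le u) h).symm
  have hdis : Disjoint (range u) (Ico u s) := by
    rw [Finset.disjoint_left]
    intro i hi hi'
    rw [mem_range] at hi
    rw [mem_Ico] at hi'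
    omega
  have h1 : N (range s) = N (range u) + N (Ico u s) := by rw [hsplit, N_union hdis]
  have h2 := N_range s
  have h3 := N_range u
  have := Nat.one_le_two_pow (n := u)
  have := Nat.one_le_two_pow (n := s)
  omega

lemma N_def (S : Finset ℕ) : N S = ∑ i ∈ S, 2 ^ i := rfl
@[simp] lemma pc_zero : pc 0 = 0 := by simp [pc]
lemma pc_two_pow (t : ℕ) : pc (2 ^ t) = 1 := by simp [pc]

def A (m j : ℕ) : Set ℕ := {x | x ≤ 2 ^ m ∧ pc x ≤ j}

lemma LNbr_mem {L : Set ℕ} {a b : ℕ} (h : LNbr L a b) : a ∈ L ∧ b ∈ L := by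
  obtain ⟨hab, hL⟩ := h
  constructor
  · have h1 : a ∈ L ∩ Set.Icc a b := by rw [hL]; exact Set.mem_insert _ _
    exact h1.1
  · have h1 : b ∈ L ∩ Set.Icc a b := by rw [hL]; right; rfl
    exact h1.1

lemma mem_Lset_step {m j x : ℕ} :
    x ∈ Lset m (j + 2) ↔ x = 0 ∨ ∃ a b, LNbr (Lset m (j+1)) a b ∧
      ∃ t ≤ Nat.log 2 (b - a), x = a + 2 ^ t := Iff.rfl

lemma Lset_step (m j : ℕ) (hj : Lset m (j + 1) = A m (j + 1)) :
    Lset m (j + 2) = A m (j + 2) := by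
  ext x
  rw [mem_Lset_step, hj]
  constructor
  · rintro (rfl | ⟨a, b, hnbr, t, ht, rfl⟩)
    · exact ⟨Nat.zero_le _, by simp⟩
    · obtain ⟨ha, hb⟩ := LNbr_mem hnbr
      obtain ⟨hab, -⟩ := hnbr
      have hba : b - a ≠ 0 := by omega
      have h2t : 2 ^ t ≤ b - a :=
        le_trans (Nat.pow_le_pow_right (by norm_num) ht) (Nat.pow_log_le_self 2 hba)
      have hb1 := hb.1
      have ha2 := ha.2
      have hpc := pc_add_two_pow a t
      exact ⟨by omega, by omega⟩
  · rintro ⟨hx, hpc⟩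
    rcases eq_or_ne x 0 with rfl | hx0
    · left; rfl
    right
    have hSne : (B x).Nonempty := Finset.nonempty_iff_ne_empty.2 (fun h => hx0 (B_eq_empty.1 h))
    set s := (B x).min' hSne with hs
    set S' := (B x).erase s with hS'def
    have hsmem : s ∈ B x := Finset.min'_mem _ _
    have hxsplit : 2 ^ s + N S' = x := by
      rw [N_def, Finset.add_sum_erase _ (fun i => 2 ^ i) hsmem, ← N_def, N_B]
    have hS'big : ∀ i ∈ S', s < i := fun i hi =>
      lt_of_le_of_ne (Finset.min'_le _ _ (Finset.mem_of_mem_erase hi))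
        (Ne.symm (Finset.ne_of_mem_erase hi))
    have hpcx1 : 1 ≤ pc x := by
      have h0 : pc x ≠ 0 := fun h => hx0 (pc_eq_zero.1 h)
      omega
    have hcardS' : S'.card = pc x - 1 := by
      rw [hS'def, Finset.card_erase_of_mem hsmem]; rfl
    have h2spos : 0 < 2 ^ s := Nat.two_pow_pos _
    by_cases hcase : pc x ≤ j + 1
    -- Case A : x itself is in A m (j+1); it is the right endpoint of a gap
    · set d := min s (j + 2 - pc x) with hd
      set u := s - d with hu
      have hus : u ≤ s := Nat.sub_le _ _
      have hdisj : Disjoint S' (Ico u s) := by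
        rw [Finset.disjoint_left]; intro i hi hi'
        have := hS'big i hi
        rw [Finset.mem_Ico] at hi'
        omega
      set a := N (S' ∪ Ico u s) with ha
      have haval : a = N S' + (2 ^ s - 2 ^ u) := by
        rw [ha, N_union hdisj, N_Ico hus]
      have h2us : 2 ^ u ≤ 2 ^ s := Nat.pow_le_pow_right (by norm_num) hus
      have h2upos : 0 < 2 ^ u := Nat.two_pow_pos _
      have hxa : x = a + 2 ^ u := by omega
      have hax : a < x := by omega
      have hpca : pc a = pc x - 1 + d := by
        rw [ha, pc_N, card_union_of_disjoint hdisj, hcardS', Nat.card_Ico]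
        omega
      have hpcaj : pc a ≤ j + 1 := by omega
      have habits : ∀ i ∈ B a, u ≤ i := by
        rw [ha, B_N]
        intro i hi
        rcases Finset.mem_union.1 hi with hi | hi
        · have := hS'big i hi; omega
        · rw [Finset.mem_Ico] at hi; omega
      have hnbr : LNbr (A m (j + 1)) a x := by
        refine ⟨hax, ?_⟩
        ext y
        simp only [Set.mem_inter_iff, Set.mem_Icc, Set.mem_insert_iff, Set.mem_singleton_iff]
        constructor
        · rintro ⟨⟨hy2, hypc⟩, hy3, hy4⟩
          by_contra hcon
          push_neg at hcon
          obtain ⟨hne1, hne2⟩ := hcon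
          have hay : a < y := lt_of_le_of_ne hy3 (Ne.symm hne1)
          have hyx : y < x := lt_of_le_of_ne hy4 hne2
          set e := y - a with he
          have hye : y = a + e := by omega
          have hepos : 0 < e := by omega
          have heu : e < 2 ^ u := by omega
          have hpcy : pc y = pc a + pc e := by rw [hye]; exact pc_add_low habits heu
          have hpce : 1 ≤ pc e := by
            have h0 : pc e ≠ 0 := fun h => (by omega : e ≠ 0) (pc_eq_zero.1 h)
            omega
          have hd2 : d = j + 2 - pc x := by
            rcases Nat.lt_or_ge s (j + 2 - pc x) with h | h
            · exfalso
              have hds : d = s := by omega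
              have hu0 : u = 0 := by omega
              rw [hu0] at heu
              simp at heu
              omega
            · omega
          omega
        · rintro (rfl | rfl)
          · exact ⟨⟨by omega, hpcaj⟩, le_refl _, le_of_lt hax⟩
          · exact ⟨⟨hx, hcase⟩, le_of_lt hax, le_rfl⟩
      refine ⟨a, x, hnbr, u, ?_, hxa⟩
      have hxa2 : x - a = 2 ^ u := by omega
      rw [hxa2, Nat.log_pow (by norm_num)]
    -- Case B : pc x = j + 2; x is in the interior of a gap
    · have hpcx : pc x = j + 2 := by omega
      set a := N S' with ha
      have hpca : pc a = j + 1 := by rw [ha, pc_N, hcardS', hpcx]; omega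
      have hS'ne : S'.Nonempty := Finset.card_pos.1 (by rw [hcardS']; omega)
      set u := S'.min' hS'ne with hu
      have humem : u ∈ S' := Finset.min'_mem _ _
      have hsu : s < u := hS'big u humem
      have haS : ∀ i ∈ B a, u ≤ i := by
        rw [ha, B_N]; exact fun i hi => Finset.min'_le _ _ hi
      have hxa : x = a + 2 ^ s := by omega
      have h2upos : 0 < 2 ^ u := Nat.two_pow_pos _
      set b := a + 2 ^ u with hb
      have hasplit : 2 ^ u + N (S'.erase u) = a := by
        rw [ha, N_def, N_def, Finset.add_sum_erase _ (fun i => 2 ^ i) humem]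
      have hpcb : pc b ≤ j + 1 := by
        have h1 : b = N (S'.erase u) + 2 ^ (u + 1) := by rw [pow_succ]; omega
        have h2 := pc_add_two_pow (N (S'.erase u)) (u + 1)
        rw [pc_N, Finset.card_erase_of_mem humem, hcardS', hpcx] at h2
        rw [h1]; omega
      have hax : a < x := by omega
      have ham : a < 2 ^ m := by omega
      have hdvd : 2 ^ u ∣ a := by
        rw [ha, N_def]
        exact Finset.dvd_sum (fun i hi => pow_dvd_pow 2 (Finset.min'_le _ _ hi))
      obtain ⟨c, hc⟩ := hdvd
      have h2ua : 2 ^ u ≤ a := by rw [ha]; exact two_pow_le_N humem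
      have hum : u < m := by
        by_contra h
        have : 2 ^ m ≤ 2 ^ u := Nat.pow_le_pow_right (by norm_num) (by omega)
        omega
      have hbm : b ≤ 2 ^ m := by
        have hmu : u + (m - u) = m := by omega
        have h2 : 2 ^ u * c < 2 ^ u * 2 ^ (m - u) := by
          rw [← pow_add, hmu]; omega
        have hclt : c < 2 ^ (m - u) := Nat.lt_of_mul_lt_mul_left h2
        have hbval : b = 2 ^ u * (c + 1) := by rw [hb, hc]; ring
        rw [hbval]
        calc 2 ^ u * (c + 1) ≤ 2 ^ u * 2 ^ (m - u) := Nat.mul_le_mul_left _ (by omega)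
        _ = 2 ^ m := by rw [← pow_add, hmu]
      have hab : a < b := by omega
      have hnbr : LNbr (A m (j + 1)) a b := by
        refine ⟨hab, ?_⟩
        ext y
        simp only [Set.mem_inter_iff, Set.mem_Icc, Set.mem_insert_iff, Set.mem_singleton_iff]
        constructor
        · rintro ⟨⟨hy2, hypc⟩, hy3, hy4⟩
          by_contra hcon
          push_neg at hcon
          obtain ⟨hne1, hne2⟩ := hcon
          have hay : a < y := lt_of_le_of_ne hy3 (Ne.symm hne1)
          have hyb : y < b := lt_of_le_of_ne hy4 hne2
          set e := y - a with he
          have hye : y = a + e := by omega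
          have hepos : 0 < e := by omega
          have heu : e < 2 ^ u := by omega
          have hpcy : pc y = pc a + pc e := by rw [hye]; exact pc_add_low haS heu
          have hpce : 1 ≤ pc e := by
            have h0 : pc e ≠ 0 := fun h => (by omega : e ≠ 0) (pc_eq_zero.1 h)
            omega
          omega
        · rintro (rfl | rfl)
          · exact ⟨⟨by omega, by omega⟩, le_refl _, le_of_lt hab⟩
          · exact ⟨⟨hbm, hpcb⟩, le_of_lt hab, le_rfl⟩
      refine ⟨a, b, hnbr, s, ?_, hxa⟩
      have hba2 : b - a = 2 ^ u := by omega
      rw [hba2, Nat.log_pow (by norm_num)]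
      omega


lemma Lset_one (m : ℕ) : Lset m 1 = A m 1 := by
  ext x
  simp only [Lset, Set.mem_union, Set.mem_singleton_iff, Set.mem_setOf_eq, A]
  constructor
  · rintro (rfl | ⟨t, ht, rfl⟩)
    · exact ⟨Nat.zero_le _, by simp⟩
    · exact ⟨Nat.pow_le_pow_right (by norm_num) ht, by rw [pc_two_pow]⟩
  · rintro ⟨hx, hpc⟩
    rcases Nat.lt_or_ge (pc x) 1 with h | h
    · left; exact pc_eq_zero.1 (by omega)
    · right
      have h1 : pc x = 1 := by omega
      rw [pc] at h1
      obtain ⟨t, ht⟩ := Finset.card_eq_one.1 h1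
      have hx' : x = 2 ^ t := by
        have h2 := N_B x
        rw [ht] at h2
        simpa [N_def] using h2.symm
      subst hx'
      exact ⟨t, (Nat.pow_le_pow_iff_right (by norm_num)).1 hx, rfl⟩

lemma Lset_eq (m : ℕ) : ∀ j, 1 ≤ j → Lset m j = A m j
  | 1, _ => Lset_one m
  | j + 2, _ => Lset_step m j (Lset_eq m (j + 1) (by omega))

def Af (m j : ℕ) : Finset ℕ := (range (2 ^ m + 1)).filter (fun x => pc x ≤ j)

lemma coe_Af (m j : ℕ) : (Af m j : Set ℕ) = A m j := by
  ext x
  simp [Af, A, Nat.lt_succ_iff]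

lemma card_Af (m j : ℕ) (hj : 1 ≤ j) :
    (Af m j).card = 1 + ∑ t ∈ range (j + 1), m.choose t := by
  have hsplit : Af m j = insert (2 ^ m) ((range (2 ^ m)).filter (fun x => pc x ≤ j)) := by
    ext x
    simp only [Af, mem_filter, mem_range, mem_insert, Nat.lt_succ_iff]
    constructor
    · rintro ⟨h1, h2⟩
      rcases eq_or_lt_of_le h1 with h | h
      · left; exact h
      · right; exact ⟨h, h2⟩
    · rintro (rfl | ⟨h1, h2⟩)
      · exact ⟨le_rfl, by rw [pc_two_pow]; omega⟩
      · exact ⟨by omega, h2⟩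
  have hnotmem : 2 ^ m ∉ (range (2 ^ m)).filter (fun x => pc x ≤ j) := by simp
  have hfc : ((range (2 ^ m)).filter (fun x => pc x ≤ j)).card
      = ∑ t ∈ range (j + 1), m.choose t := by
    have himg : (range (2 ^ m)).filter (fun x => pc x ≤ j) =
        ((range m).powerset.filter (fun S => S.card ≤ j)).image N := by
      ext x
      simp only [mem_filter, mem_range, mem_image, mem_powerset]
      constructor
      · rintro ⟨h1, h2⟩
        exact ⟨B x, ⟨lt_two_pow_iff.1 h1, h2⟩, N_B x⟩
      · rintro ⟨S, ⟨hS1, hS2⟩, rfl⟩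
        exact ⟨N_lt hS1, by rw [pc_N]; exact hS2⟩
    rw [himg, Finset.card_image_of_injective _ (Function.LeftInverse.injective B_N)]
    have hbi : (range m).powerset.filter (fun S => S.card ≤ j) =
        (range (j + 1)).biUnion (fun t => Finset.powersetCard t (range m)) := by
      ext S
      simp only [mem_filter, mem_powerset, mem_biUnion, mem_range, Finset.mem_powersetCard,
        Nat.lt_succ_iff]
      constructor
      · rintro ⟨h1, h2⟩; exact ⟨S.card, h2, h1, rfl⟩
      · rintro ⟨t, ht, h1, rfl⟩; exact ⟨h1, ht⟩
    rw [hbi, Finset.card_biUnion]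
    · apply Finset.sum_congr rfl
      intro t _
      rw [Finset.card_powersetCard, card_range]
    · intro t1 h1 t2 h2 hne
      simp only [Function.onFun]
      rw [Finset.disjoint_left]
      intro S hS1 hS2
      rw [Finset.mem_powersetCard] at hS1 hS2
      exact hne (hS1.2.symm.trans hS2.2)
  rw [hsplit, card_insert_of_notMem hnotmem, hfc]
  omega


lemma sum_Icc_choose (n k : ℕ) :
    ∑ i ∈ Finset.Icc 1 k, n.choose i = ∑ i ∈ range k, n.choose (i + 1) := by
  induction k with
  | zero => simp
  | succ k ih =>
    rw [Finset.sum_Icc_succ_top (by omega : 1 ≤ k + 1), ih, Finset.sum_range_succ]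

lemma pascal_sum (n k : ℕ) :
    ∑ t ∈ range (k + 2), (n + 1).choose t
      = 2 + 2 * ∑ i ∈ Finset.Icc 1 k, n.choose i + n.choose (k + 1) := by
  have h1 : ∑ t ∈ range (k + 2), (n + 1).choose t
      = (∑ t ∈ range (k + 1), (n + 1).choose (t + 1)) + 1 := by
    rw [Finset.sum_range_succ']; simp
  have h2 : ∑ t ∈ range (k + 1), (n + 1).choose (t + 1)
      = (∑ t ∈ range (k + 1), n.choose t) + ∑ t ∈ range (k + 1), n.choose (t + 1) := by
    rw [← Finset.sum_add_distrib]
    exact Finset.sum_congr rfl (fun t _ => Nat.choose_succ_succ _ _)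
  have h3 : ∑ t ∈ range (k + 1), n.choose t
      = (∑ t ∈ range k, n.choose (t + 1)) + 1 := by
    rw [Finset.sum_range_succ']; simp
  have h4 : ∑ t ∈ range (k + 1), n.choose (t + 1)
      = (∑ t ∈ range k, n.choose (t + 1)) + n.choose (k + 1) := Finset.sum_range_succ _ _
  have h5 := sum_Icc_choose n k
  omega

lemma sum_identity (n k : ℕ) :
    ∑ i ∈ Finset.Icc 1 k, (1 + ∑ t ∈ range (i + 1), (n + 1).choose t)
      = 3 * k + ∑ i ∈ Finset.Icc 1 k, (2 * k - 2 * i + 1) * n.choose i := by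
  induction k with
  | zero => simp
  | succ k ih =>
    rw [Finset.sum_Icc_succ_top (by omega : 1 ≤ k + 1), ih,
        Finset.sum_Icc_succ_top (by omega : 1 ≤ k + 1)]
    have hshift : ∑ i ∈ Finset.Icc 1 k, (2 * (k + 1) - 2 * i + 1) * n.choose i
        = (∑ i ∈ Finset.Icc 1 k, (2 * k - 2 * i + 1) * n.choose i)
          + 2 * ∑ i ∈ Finset.Icc 1 k, n.choose i := by
      rw [Finset.mul_sum, ← Finset.sum_add_distrib]
      apply Finset.sum_congr rfl
      intro i hi
      rw [Finset.mem_Icc] at hi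
      have h : 2 * (k + 1) - 2 * i + 1 = (2 * k - 2 * i + 1) + 2 := by omega
      rw [h]; ring
    have hp : ∑ t ∈ range (k + 1 + 1), (n + 1).choose t
        = 2 + 2 * ∑ i ∈ Finset.Icc 1 k, n.choose i + n.choose (k + 1) := pascal_sum n k
    have hnew : 2 * (k + 1) - 2 * (k + 1) + 1 = 1 := by omega
    rw [hshift, hnew]
    omega

def Vf (m k : ℕ) : Finset (ℕ × ℕ) :=
  ({0} ×ˢ range (2 ^ m + 1)) ∪ (Finset.Icc 1 k).biUnion (fun i => {i} ×ˢ Af m i)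

lemma coe_Vf (m k : ℕ) : (Vf m k : Set (ℕ × ℕ)) = LRVertexSet m k := by
  ext ⟨i, t⟩
  simp only [Vf, LRVertexSet, Finset.coe_union, Set.mem_union, Finset.mem_coe,
    Finset.mem_union, Finset.mem_biUnion, Finset.mem_product, Finset.mem_singleton,
    Finset.mem_range, Finset.mem_Icc, Nat.lt_succ_iff, Set.mem_setOf_eq]
  constructor
  · rintro (⟨h0, ht⟩ | h)
    · exact Or.inl ⟨h0, ht⟩
    · obtain ⟨i', hi', rfl, hAf⟩ := h
      refine Or.inr ⟨hi'.1, hi'.2, ?_⟩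
      rw [Lset_eq m _ hi'.1, ← coe_Af]
      exact hAf
  · rintro (⟨h0, ht⟩ | ⟨hi1, hi2, hL⟩)
    · exact Or.inl ⟨h0, ht⟩
    · refine Or.inr ⟨i, ⟨hi1, hi2⟩, rfl, ?_⟩
      rw [Lset_eq m i hi1, ← coe_Af m i] at hL
      exact hL

lemma card_Vf (m k : ℕ) :
    (Vf m k).card = (2 ^ m + 1) + ∑ i ∈ Finset.Icc 1 k, (Af m i).card := by
  rw [Vf, Finset.card_union_of_disjoint, Finset.card_biUnion]
  · congr 1
    · rw [Finset.card_product, Finset.card_singleton, Finset.card_range, one_mul]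
    · apply Finset.sum_congr rfl
      intro i _
      rw [Finset.card_product, Finset.card_singleton, one_mul]
  · intro i1 h1 i2 h2 hne
    simp only [Function.onFun]
    rw [Finset.disjoint_left]
    rintro ⟨a, b⟩ hm1 hm2
    rw [Finset.mem_product, Finset.mem_singleton] at hm1 hm2
    exact hne (hm1.1.symm.trans hm2.1)
  · rw [Finset.disjoint_left]
    rintro ⟨a, b⟩ hm1 hm2
    rw [Finset.mem_product, Finset.mem_singleton] at hm1
    rw [Finset.mem_biUnion] at hm2
    obtain ⟨i, hi, hm2⟩ := hm2
    rw [Finset.mem_product, Finset.mem_singleton] at hm2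
    rw [Finset.mem_Icc] at hi
    omega

end LRC

/-- The number of vertices of `LR^k(2^m)` equals
`2^m + k + 1 + 2k + ∑_{i=1}^{k} (2k - 2i + 1) * C(m-1, i)`. -/
theorem lr_vertex_count (m k : ℕ) (hm : 1 ≤ m) :
    (LRVertexSet m k).ncard =
      2 ^ m + k + 1 + 2 * k +
        ∑ i ∈ Finset.Icc 1 k, (2 * k - 2 * i + 1) * Nat.choose (m - 1) i := by
  obtain ⟨n, rfl⟩ : ∃ n, m = n + 1 := ⟨m - 1, by omega⟩
  rw [← LRC.coe_Vf, Set.ncard_coe_finset, LRC.card_Vf]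
  rw [Finset.sum_congr rfl (fun i hi => LRC.card_Af (n + 1) i (Finset.mem_Icc.1 hi).1)]
  rw [LRC.sum_identity]
  simp only [Nat.add_sub_cancel]
  omega
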